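/- The complete graph K_n (n ≥ 3) does not exhibit perfect state transfer: for all t ∈ ℝ and all distinct vertices u ≠ v, |H_{A}(t)_{u,v}| < 1, where A = J_n - I_n is the adjacency matrix of K_n. -/

import Mathlib

open Kronecker

/-- Adjacency matrix of the complete graph `K_n`, as a complex matrix. -/
noncomputable def Kadj (n : ℕ) : Matrix (Fin n) (Fin n) ℂ :=
  Matrix.of fun i j => if i = j then 0 else 1

/-- Adjacency matrix of `K_2`, indexed by `ZMod 2`. -/
noncomputable def A2 : Matrix (ZMod 2) (ZMod 2) ℂ :=
  Matrix.of fun i j => if i = j then 0 else 1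

/-- Kronecker product of a family of matrices. -/
noncomputable def kronC {d : ℕ} {n : Fin d → ℕ}
    (M : ∀ i, Matrix (Fin (n i)) (Fin (n i)) ℂ) :
    Matrix (∀ i, Fin (n i)) (∀ i, Fin (n i)) ℂ :=
  Matrix.of fun u v => ∏ i, M i (u i) (v i)

/-- `M_a = A_{K_2}^{a_1} ⊗ ⋯ ⊗ A_{K_2}^{a_r}` for `a ∈ (ℤ/2)^r`. -/
noncomputable def cube {r : ℕ} (a : Fin r → ZMod 2) :
    Matrix (Fin r → ZMod 2) (Fin r → ZMod 2) ℂ :=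
  Matrix.of fun u v => ∏ j, (if a j = 1 then A2 else 1) (u j) (v j)

/-- `A_{K_{n_1}}^{a_1} ⊗ ⋯ ⊗ A_{K_{n_d}}^{a_d}`. -/
noncomputable def compKron {d : ℕ} (n : Fin d → ℕ) (a : Fin d → ZMod 2) :
    Matrix (∀ i, Fin (n i)) (∀ i, Fin (n i)) ℂ :=
  kronC fun i => if a i = 1 then Kadj (n i) else 1

/-- Hamming weight. -/
def wt {m : ℕ} (a : Fin m → ZMod 2) : ℕ :=
  (Finset.univ.filter fun i => a i = 1).card


open NormedSpace in
noncomputable def Pmat (n : ℕ) : Matrix (Fin n) (Fin n) ℂ :=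
  Matrix.of fun _ _ => (n : ℂ)⁻¹

lemma Pmat_mul (n : ℕ) (hn : (n:ℂ) ≠ 0) : Pmat n * Pmat n = Pmat n := by
  ext i j
  simp [Pmat, Matrix.mul_apply, Finset.sum_const]
  field_simp

noncomputable def phi (n : ℕ) (hn : (n:ℂ) ≠ 0) : (ℂ × ℂ) →+* Matrix (Fin n) (Fin n) ℂ where
  toFun z := z.1 • Pmat n + z.2 • (1 - Pmat n)
  map_one' := by simp
  map_zero' := by simp
  map_add' x y := by simp [add_smul]; abel
  map_mul' x y := by
    have h := Pmat_mul n hn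
    simp only [Prod.fst_mul, Prod.snd_mul]
    rw [add_mul, mul_add, mul_add]
    simp only [smul_mul_assoc, mul_smul_comm, mul_one, one_mul, sub_mul, mul_sub, h]
    simp only [sub_self, smul_zero, smul_sub, smul_smul]
    ring_nf
    abel

lemma phi_cont (n : ℕ) (hn : (n:ℂ) ≠ 0) : Continuous (phi n hn) := by
  show Continuous fun z : ℂ × ℂ => z.1 • Pmat n + z.2 • (1 - Pmat n)
  fun_prop

lemma key (n : ℕ) (hn : (n:ℂ) ≠ 0) (c : ℂ) :
    c • Kadj n = phi n hn (((n : ℂ) - 1) * c, -c) := by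
  show c • Kadj n = (((n:ℂ)-1)*c) • Pmat n + (-c) • (1 - Pmat n)
  ext i j
  by_cases h : i = j <;>
    simp [Kadj, Pmat, Matrix.one_apply, h, Matrix.sub_apply, Matrix.smul_apply] <;>
    field_simp <;> ring

lemma exp_entry (n : ℕ) (hn : (n:ℂ) ≠ 0) (c : ℂ) (u v : Fin n) (huv : u ≠ v) :
    (NormedSpace.exp (c • Kadj n)) u v
      = (Complex.exp (((n:ℂ)-1)*c) - Complex.exp (-c)) * (n:ℂ)⁻¹ := by
  letI : SeminormedRing (Matrix (Fin n) (Fin n) ℂ) := Matrix.linftyOpSemiNormedRing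
  letI : NormedRing (Matrix (Fin n) (Fin n) ℂ) := Matrix.linftyOpNormedRing
  letI : NormedAlgebra ℂ (Matrix (Fin n) (Fin n) ℂ) := Matrix.linftyOpNormedAlgebra
  rw [key n hn c]
  erw [← NormedSpace.map_exp (phi n hn) (phi_cont n hn)]
  have he : NormedSpace.exp ((((n : ℂ) - 1) * c, -c) : ℂ × ℂ)
      = (Complex.exp (((n:ℂ)-1)*c), Complex.exp (-c)) := by
    ext
    · rw [Prod.fst_exp, Complex.exp_eq_exp_ℂ]
    · rw [Prod.snd_exp, Complex.exp_eq_exp_ℂ]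
  rw [he]
  show ((_ : ℂ) • Pmat n + (_ : ℂ) • (1 - Pmat n)) u v = _
  simp [Pmat, Matrix.one_apply, huv, Matrix.sub_apply, Matrix.smul_apply]
  ring

/-- the complete graph `K_n` (`n ≥ 3`) has no perfect state transfer. -/
theorem stmt3 (n : ℕ) (hn : 3 ≤ n) (t : ℝ) (u v : Fin n) (huv : u ≠ v) :
    ‖(NormedSpace.exp ((-Complex.I * (t : ℂ)) • Kadj n)) u v‖ < 1 := by
  have hn0 : (n:ℂ) ≠ 0 := by
    exact_mod_cast Nat.cast_ne_zero.mpr (by omega)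
  rw [exp_entry n hn0 _ u v huv]
  rw [norm_mul]
  have h1 : ‖(Complex.exp (((n:ℂ)-1)*(-Complex.I * t))
      - Complex.exp (-(-Complex.I * t)))‖ ≤ 2 := by
    refine (norm_sub_le _ _).trans ?_
    have e1 : ‖(Complex.exp (((n:ℂ)-1)*(-Complex.I * t)))‖ = 1 := by
      rw [Complex.norm_exp]
      have : ((((n:ℂ)-1)*(-Complex.I * t)).re) = 0 := by
        simp [Complex.mul_re, Complex.mul_im]
      rw [this, Real.exp_zero]
    have e2 : ‖(Complex.exp (-(-Complex.I * t)))‖ = 1 := by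
      rw [Complex.norm_exp]
      have : ((-(-Complex.I * t)).re) = 0 := by simp
      rw [this, Real.exp_zero]
    rw [e1, e2]; norm_num
  have h2 : ‖((n:ℂ)⁻¹)‖ = (n:ℝ)⁻¹ := by
    rw [norm_inv, Complex.norm_natCast]
  rw [h2]
  have hn3 : (3:ℝ) ≤ n := by exact_mod_cast hn
  calc ‖_‖ * (n:ℝ)⁻¹ ≤ 2 * (n:ℝ)⁻¹ := by gcongr
      _ ≤ 2 * (3:ℝ)⁻¹ := by gcongr
      _ < 1 := by norm_num
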